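/- Let G be a symmetric positive semidefinite real 3×3 matrix, |y|_D := √(y · (G y)), D = {y ∈ ℝ³ : y · (G y) ≤ 1}, and V_D^cv(y) := −|y|_D² for y ∈ D, V_D^cv(y) := −2|y|_D + 1 for y ∉ D. Define g : ℝ³ → ℝ³ by g(x) = −2 G x for x ∈ D and g(x) = −2 G x / |x|_D for x ∉ D. Then the concavity (supergradient) inequality V_D^cv(x) + g(x) · (y − x) ≥ V_D^cv(y) holds for all x, y ∈ ℝ³. -/

import Mathlib

open scoped Matrix

lemma sym_aux (G : Matrix (Fin 3) (Fin 3) ℝ) (hG : G.PosSemidef) (x y : Fin 3 → ℝ) :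
    x ⬝ᵥ G.mulVec y = y ⬝ᵥ G.mulVec x := by
  have h : Gᵀ = G := by
    have := hG.1.eq
    rwa [Matrix.conjTranspose_eq_transpose_of_trivial] at this
  rw [Matrix.dotProduct_mulVec, ← Matrix.mulVec_transpose, h, dotProduct_comm]

lemma cs_aux (G : Matrix (Fin 3) (Fin 3) ℝ) (hG : G.PosSemidef) (x y : Fin 3 → ℝ) :
    x ⬝ᵥ G.mulVec y ≤ Real.sqrt (x ⬝ᵥ G.mulVec x) * Real.sqrt (y ⬝ᵥ G.mulVec y) := by
  set b := x ⬝ᵥ G.mulVec y with hb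
  have key : discrim (y ⬝ᵥ G.mulVec y) (2 * b) (x ⬝ᵥ G.mulVec x) ≤ 0 := by
    apply discrim_le_zero
    intro t
    have h0 : 0 ≤ (x + t • y) ⬝ᵥ G.mulVec (x + t • y) := by
      simpa using hG.dotProduct_mulVec_nonneg (x + t • y)
    have hsym := sym_aux G hG x y
    simp only [Matrix.mulVec_add, Matrix.mulVec_smul, dotProduct_add,
      add_dotProduct, dotProduct_smul, smul_dotProduct,
      smul_eq_mul] at h0
    rw [← hsym] at h0
    nlinarith [h0]
  rw [discrim] at key
  have hx : 0 ≤ x ⬝ᵥ G.mulVec x := by simpa using hG.dotProduct_mulVec_nonneg x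
  have hy : 0 ≤ y ⬝ᵥ G.mulVec y := by simpa using hG.dotProduct_mulVec_nonneg y
  have h1 : b * b ≤ (x ⬝ᵥ G.mulVec x) * (y ⬝ᵥ G.mulVec y) := by nlinarith
  have h2 : Real.sqrt (x ⬝ᵥ G.mulVec x) * Real.sqrt (y ⬝ᵥ G.mulVec y)
      = Real.sqrt ((x ⬝ᵥ G.mulVec x) * (y ⬝ᵥ G.mulVec y)) := (Real.sqrt_mul hx _).symm
  calc b ≤ |b| := le_abs_self b
    _ = Real.sqrt (b * b) := (Real.sqrt_mul_self_eq_abs b).symm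
    _ ≤ _ := by rw [h2]; exact Real.sqrt_le_sqrt h1

open Classical in
/-- Supergradient (concavity) inequality for the concave part `V_D^cv` of the confinement
potential: with `g(x) = −2 G x` on `D` and `g(x) = −2 G x / |x|_D` outside `D`, one has
`V_D^cv(x) + g(x) ⬝ (y − x) ≥ V_D^cv(y)` for all `x, y ∈ ℝ³`. -/
theorem concave_part_supergradient_inequality
    (G : Matrix (Fin 3) (Fin 3) ℝ) (hG : G.PosSemidef)
    (Vcv : (Fin 3 → ℝ) → ℝ)
    (hVcv : ∀ y, Vcv y =
      if y ⬝ᵥ G.mulVec y ≤ 1 then -(Real.sqrt (y ⬝ᵥ G.mulVec y)) ^ 2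
      else -2 * Real.sqrt (y ⬝ᵥ G.mulVec y) + 1)
    (g : (Fin 3 → ℝ) → (Fin 3 → ℝ))
    (hg : ∀ x, g x =
      if x ⬝ᵥ G.mulVec x ≤ 1 then (-2 : ℝ) • G.mulVec x
      else (-2 / Real.sqrt (x ⬝ᵥ G.mulVec x)) • G.mulVec x) :
    ∀ x y : Fin 3 → ℝ, Vcv y ≤ Vcv x + g x ⬝ᵥ (y - x) := by
  intro x y
  have hx : 0 ≤ x ⬝ᵥ G.mulVec x := by simpa using hG.dotProduct_mulVec_nonneg x
  have hy : 0 ≤ y ⬝ᵥ G.mulVec y := by simpa using hG.dotProduct_mulVec_nonneg y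
  set qx := x ⬝ᵥ G.mulVec x with hqx
  set qy := y ⬝ᵥ G.mulVec y with hqy
  set s := Real.sqrt qx with hs
  set t := Real.sqrt qy with ht
  have hs0 : 0 ≤ s := Real.sqrt_nonneg _
  have ht0 : 0 ≤ t := Real.sqrt_nonneg _
  have hs2 : s ^ 2 = qx := Real.sq_sqrt hx
  have ht2 : t ^ 2 = qy := Real.sq_sqrt hy
  set b := x ⬝ᵥ G.mulVec y with hb
  have hcs : b ≤ s * t := cs_aux G hG x y
  have hdot : G.mulVec x ⬝ᵥ (y - x) = b - qx := by
    rw [dotProduct_comm, sub_dotProduct, sym_aux G hG y x]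
  rw [hVcv x, hVcv y, hg x]
  set u := 2 / s with hu
  have hneg : (-2 / s : ℝ) = -u := by rw [hu, neg_div]
  by_cases h1 : qx ≤ 1 <;> by_cases h2 : qy ≤ 1 <;>
    simp only [← hqx, ← hqy, ← hs, ← ht, h1, h2, if_true, if_false, smul_dotProduct, smul_eq_mul, hdot, hneg]
  · nlinarith [sq_nonneg (s - t), hcs, hs2, ht2]
  · have ht1 : 1 < t := by
      have := Real.sqrt_lt_sqrt (by norm_num : (0:ℝ) ≤ 1) (by linarith : (1:ℝ) < qy)
      simpa [ht, Real.sqrt_one] using this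
    have hs1 : s ≤ 1 := by nlinarith
    nlinarith [sq_nonneg (s - 1), sq_nonneg (t - 1)]
  · have hs1 : 1 < s := by nlinarith
    have hspos : (0:ℝ) < s := by linarith
    have hus : u * s = 2 := by rw [hu]; field_simp
    have hu0 : 0 ≤ u := by rw [hu]; positivity
    nlinarith [mul_nonneg hu0 (sub_nonneg.mpr hcs), sq_nonneg (t - 1)]
  · have hs1 : 1 < s := by nlinarith
    have hspos : (0:ℝ) < s := by linarith
    have hus : u * s = 2 := by rw [hu]; field_simp
    have hu0 : 0 ≤ u := by rw [hu]; positivity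
    nlinarith [mul_nonneg hu0 (sub_nonneg.mpr hcs)]
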